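/- The rank map of the previous statement is a bijection from the set of binary words of length n with exactly w ones onto {0, 1, ..., C(n,w) - 1}. -/

import Mathlib

/-- Hamming weight (number of ones) of a binary word. -/
def wt {n : ℕ} (v : Fin n → Bool) : ℕ :=
  (Finset.univ.filter fun i => v i = true).card

/-- Strict lexicographic order on binary words (most significant letter first,
with `false < true`, i.e. `0 < 1`). -/
def lexLt {n : ℕ} (u v : Fin n → Bool) : Prop :=
  ∃ k : Fin n, (∀ i < k, u i = v i) ∧ u k = false ∧ v k = true

/-- The rank formula `rank(x₁…xₙ) = ∑_{k=1}^n x_k · C(n-k, w - ∑_{i<k} x_i)`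
(with `C(t,m) = 0` when `t < m`). -/
def rankF {n : ℕ} (w : ℕ) (v : Fin n → Bool) : ℕ :=
  ∑ k : Fin n, (if v k then 1 else 0) *
    Nat.choose (n - 1 - (k : ℕ))
      (w - (Finset.univ.filter fun i : Fin n => i < k ∧ v i = true).card)

lemma wt_eq_sum {n : ℕ} (v : Fin n → Bool) :
    wt v = ∑ i, if v i = true then 1 else 0 := Finset.card_filter _ _

lemma wt_succ {n : ℕ} (v : Fin (n+1) → Bool) :
    wt v = (if v 0 = true then 1 else 0) + wt (Fin.tail v) := by
  rw [wt_eq_sum, wt_eq_sum, Fin.sum_univ_succ]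
  rfl

lemma cnt_succ {n : ℕ} (v : Fin (n+1) → Bool) (k : Fin n) :
    (Finset.univ.filter fun i : Fin (n+1) => i < k.succ ∧ v i = true).card
      = (if v 0 = true then 1 else 0) +
        (Finset.univ.filter fun j : Fin n => j < k ∧ Fin.tail v j = true).card := by
  rw [Finset.card_filter, Finset.card_filter, Fin.sum_univ_succ]
  congr 1
  · simp [Fin.succ_pos]
  · apply Finset.sum_congr rfl
    intro j _
    simp [Fin.succ_lt_succ_iff, Fin.tail]
    congr

lemma rank_succ {n w : ℕ} (v : Fin (n+1) → Bool) :
    rankF w v = (if v 0 = true then Nat.choose n w else 0) +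
      rankF (w - (if v 0 = true then 1 else 0)) (Fin.tail v) := by
  rw [rankF, Fin.sum_univ_succ]
  congr 1
  · have h : (Finset.univ.filter fun i : Fin (n+1) => i < 0 ∧ v i = true) = ∅ := by
      simp [Finset.filter_eq_empty_iff]
    rw [h]
    cases hv : v 0 <;> simp [hv]
  · rw [rankF]
    apply Finset.sum_congr rfl
    intro k _
    rw [cnt_succ]
    have h1 : (n + 1) - 1 - ((k.succ : Fin (n+1)) : ℕ) = n - 1 - (k : ℕ) := by
      simp [Fin.val_succ]; omega
    have h2 : w - ((if v 0 = true then 1 else 0) +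
        (Finset.univ.filter fun j : Fin n => j < k ∧ Fin.tail v j = true).card)
        = (w - (if v 0 = true then 1 else 0)) -
          (Finset.univ.filter fun j : Fin n => j < k ∧ Fin.tail v j = true).card := by
      omega
    rw [h1, h2]
    rfl


/-- the rank map is a bijection from the set of binary words of
length `n` with exactly `w` ones onto `{0, 1, …, C(n,w) - 1}`. -/
theorem rank_formula_bijective (n w : ℕ) :
    Set.BijOn (rankF w) {v : Fin n → Bool | wt v = w}
      {t : ℕ | t < Nat.choose n w} := by
  induction n generalizing w with
  | zero =>
    cases w with
    | zero =>
      refine ⟨?_, ?_, ?_⟩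
      · intro v _
        simp [rankF]
      · intro u _ v _ _
        funext i
        exact i.elim0
      · intro t ht
        simp only [Set.mem_setOf_eq, Nat.choose_self, Nat.lt_one_iff] at ht
        subst ht
        exact ⟨fun i => i.elim0, by simp [wt], by simp [rankF]⟩
    | succ w' =>
      have h1 : {v : Fin 0 → Bool | wt v = w' + 1} = ∅ := by
        ext v; simp [wt]
      have h2 : {t : ℕ | t < Nat.choose 0 (w' + 1)} = ∅ := by
        simp [Nat.choose]
      rw [h1, h2]
      exact Set.bijOn_empty _
  | succ n ih =>
    refine ⟨?_, ?_, ?_⟩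
    · -- MapsTo
      intro v hv
      simp only [Set.mem_setOf_eq] at hv ⊢
      rw [rank_succ]
      cases hv0 : v 0 with
      | false =>
        simp only [hv0, if_neg Bool.false_ne_true, zero_add, Nat.sub_zero]
        have hwt : wt (Fin.tail v) = w := by
          rw [wt_succ, hv0] at hv; simpa using hv
        have := (ih w).mapsTo hwt
        simp only [Set.mem_setOf_eq] at this
        exact lt_of_lt_of_le this (Nat.choose_le_choose w (Nat.le_succ n))
      | true =>
        rw [wt_succ, hv0] at hv
        simp only [if_true] at hv ⊢
        obtain ⟨w', rfl⟩ : ∃ w', w = w' + 1 := ⟨wt (Fin.tail v), by omega⟩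
        have hwt : wt (Fin.tail v) = w' := by omega
        have := (ih w').mapsTo hwt
        simp only [Set.mem_setOf_eq] at this
        rw [Nat.choose_succ_succ' n w']
        simp only [Nat.add_sub_cancel]
        omega
    · -- InjOn
      intro u hu v hv heq
      simp only [Set.mem_setOf_eq] at hu hv
      rw [rank_succ, rank_succ] at heq
      have hbu := (ih (w - (if u 0 = true then 1 else 0))).mapsTo
        (show wt (Fin.tail u) = w - (if u 0 = true then 1 else 0) by
          rw [wt_succ] at hu; omega)
      have hbv := (ih (w - (if v 0 = true then 1 else 0))).mapsTo
        (show wt (Fin.tail v) = w - (if v 0 = true then 1 else 0) by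
          rw [wt_succ] at hv; omega)
      simp only [Set.mem_setOf_eq] at hbu hbv
      have h0 : u 0 = v 0 := by
        cases hu0 : u 0 <;> cases hv0 : v 0
        · rfl
        · exfalso
          simp only [hu0, hv0] at heq hbu hbv
          simp only [if_true, Bool.false_eq_true, if_false, zero_add,
            Nat.sub_zero] at heq hbu hbv
          omega
        · exfalso
          simp only [hu0, hv0] at heq hbu hbv
          simp only [if_true, Bool.false_eq_true, if_false, zero_add,
            Nat.sub_zero] at heq hbu hbv
          omega
        · rfl
      have htail : Fin.tail u = Fin.tail v := by
        rw [h0] at heq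
        have heq' : rankF (w - (if v 0 = true then 1 else 0)) (Fin.tail u)
            = rankF (w - (if v 0 = true then 1 else 0)) (Fin.tail v) := by omega
        exact (ih (w - (if v 0 = true then 1 else 0))).injOn
          (by simp only [Set.mem_setOf_eq]; rw [wt_succ, h0] at hu; omega)
          (by simp only [Set.mem_setOf_eq]; rw [wt_succ] at hv; omega) heq'
      funext i
      induction i using Fin.cases with
      | zero => exact h0
      | succ j => exact congrFun htail j
    · -- SurjOn
      intro t ht
      simp only [Set.mem_setOf_eq] at ht
      by_cases hc : t < Nat.choose n w
      · obtain ⟨v', hv', hr⟩ := (ih w).surjOn hc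
        simp only [Set.mem_setOf_eq] at hv'
        refine ⟨Fin.cons false v', ?_, ?_⟩
        · simp only [Set.mem_setOf_eq]
          rw [wt_succ]
          simp [Fin.tail_cons, hv']
        · rw [rank_succ]
          simp [Fin.tail_cons, hr]
      · cases w with
        | zero => simp at ht hc; omega
        | succ w' =>
          rw [Nat.choose_succ_succ' n w'] at ht
          have hlt : t - Nat.choose n (w' + 1) < Nat.choose n w' := by omega
          obtain ⟨v', hv', hr⟩ := (ih w').surjOn hlt
          simp only [Set.mem_setOf_eq] at hv'
          refine ⟨Fin.cons true v', ?_, ?_⟩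
          · simp only [Set.mem_setOf_eq]
            rw [wt_succ]
            simp [Fin.tail_cons, hv']
            omega
          · rw [rank_succ]
            simp only [Fin.cons_zero, if_true, Fin.tail_cons,
              Nat.add_sub_cancel, hr]
            omega
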